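/- Let F be a totally real number field of degree N with ring of integers 𝒪, let σ range over the N real embeddings F → ℝ, let m ∈ F be nonzero and let n be a positive rational number. Let 𝒪^{×,+} denote the group of totally positive units of 𝒪 (units λ with σ(λ) > 0 for all σ). Consider S = { (y, y') ∈ m𝒪 × m𝒪 : tr_{F/ℚ}(y y') = n and σ(y)·σ(y') > 0 for every σ }. Then S has finitely many 𝒪^{×,+}-orbits under the action λ·(y, y') = (λ y, λ⁻¹ y'); that is, there exists a finite subset S₀ ⊆ S such that every element of S equals (λ y, λ⁻¹ y') for some λ ∈ 𝒪^{×,+} and some (y, y') ∈ S₀. -/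

import Mathlib

open NumberField

section Aux

variable {F : Type*} [Field F] [NumberField F] {N : ℕ}

private lemma real_complex_bijective (hdeg : Module.finrank ℚ F = N)
    {σ : Fin N → (F →+* ℝ)} (hσ : Function.Bijective σ) :
    Function.Bijective (fun j : Fin N => Complex.ofRealHom.comp (σ j)) := by
  classical
  have hinj : Function.Injective (fun j : Fin N => Complex.ofRealHom.comp (σ j)) := by
    intro i j hij
    apply hσ.1
    ext x
    have := RingHom.congr_fun hij x
    simpa using this
  have hcard : Fintype.card (Fin N) = Fintype.card (F →+* ℂ) := by
    rw [NumberField.Embeddings.card F ℂ, hdeg, Fintype.card_fin]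
  exact (Fintype.bijective_iff_injective_and_card _).2 ⟨hinj, hcard⟩

private lemma trace_eq_sum_sigma (hdeg : Module.finrank ℚ F = N)
    {σ : Fin N → (F →+* ℝ)} (hσ : Function.Bijective σ) (x : F) :
    ((Algebra.trace ℚ F x : ℚ) : ℝ) = ∑ j, σ j x := by
  classical
  have hbij := real_complex_bijective hdeg hσ
  have key : (algebraMap ℚ ℂ) (Algebra.trace ℚ F x) = ∑ φ : F →ₐ[ℚ] ℂ, φ x :=
    trace_eq_sum_embeddings ℂ
  have h2 : ∑ φ : F →+* ℂ, φ x = ∑ φ : F →ₐ[ℚ] ℂ, φ x :=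
    Fintype.sum_equiv (RingHom.equivRatAlgHom F ℂ) (fun φ => φ x) (fun φ => φ x) (fun φ => rfl)
  have h3 : ∑ j : Fin N, (Complex.ofRealHom.comp (σ j)) x = ∑ φ : F →+* ℂ, φ x :=
    Fintype.sum_bijective _ hbij _ (fun φ => φ x) (fun j => rfl)
  apply Complex.ofReal_injective
  push_cast
  calc ((Algebra.trace ℚ F x : ℚ) : ℂ) = (algebraMap ℚ ℂ) (Algebra.trace ℚ F x) := by
        norm_cast
  _ = ∑ φ : F →ₐ[ℚ] ℂ, φ x := key
  _ = ∑ j : Fin N, (Complex.ofRealHom.comp (σ j)) x := (h3.trans h2).symm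
  _ = ∑ j : Fin N, ((σ j x : ℝ) : ℂ) := rfl

private lemma zset_finite (hdeg : Module.finrank ℚ F = N)
    {σ : Fin N → (F →+* ℝ)} (hσ : Function.Bijective σ)
    {m : F} (hm : m ≠ 0) {n : ℚ} (hn : 0 < n) :
    {z : F | (∃ a : 𝓞 F, z = m ^ 2 * (a : F)) ∧ Algebra.trace ℚ F z = n ∧
      ∀ j, 0 < σ j z}.Finite := by
  classical
  set B : ℝ := (n : ℝ) * ∑ j, |σ j ((m ^ 2)⁻¹)| with hB
  have hfin := NumberField.Embeddings.finite_of_norm_le F ℂ B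
  apply Set.Finite.subset ((hfin.image (fun x : F => m ^ 2 * x)))
  rintro z ⟨⟨a, rfl⟩, htr, hpos⟩
  refine ⟨(a : F), ⟨NumberField.RingOfIntegers.isIntegral_coe a, ?_⟩, rfl⟩
  intro φ
  obtain ⟨j, rfl⟩ := (real_complex_bijective hdeg hσ).2 φ
  have hφ : ‖(Complex.ofRealHom.comp (σ j)) (a : F)‖ = |σ j (a : F)| := by
    simp [Complex.norm_real]
  rw [hφ]
  -- each σ j z is at most n
  have hsum : ∑ k, σ k (m ^ 2 * (a : F)) = (n : ℝ) := by
    rw [← trace_eq_sum_sigma hdeg hσ, htr]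
  have hle : σ j (m ^ 2 * (a : F)) ≤ (n : ℝ) := by
    rw [← hsum]
    exact Finset.single_le_sum (fun k _ => (hpos k).le) (Finset.mem_univ j)
  have hm2 : (m ^ 2 : F) ≠ 0 := pow_ne_zero _ hm
  have hval : σ j (a : F) = σ j ((m ^ 2)⁻¹) * σ j (m ^ 2 * (a : F)) := by
    rw [← map_mul]
    congr 1
    field_simp
  rw [hval, abs_mul]
  have habs : |σ j (m ^ 2 * (a : F))| = σ j (m ^ 2 * (a : F)) := abs_of_pos (hpos j)
  rw [habs]
  calc |σ j ((m ^ 2)⁻¹)| * σ j (m ^ 2 * (a : F))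
      ≤ |σ j ((m ^ 2)⁻¹)| * (n : ℝ) := by
        exact mul_le_mul_of_nonneg_left hle (abs_nonneg _)
  _ = (n : ℝ) * |σ j ((m ^ 2)⁻¹)| := mul_comm _ _
  _ ≤ B := by
        rw [hB]
        refine mul_le_mul_of_nonneg_left ?_ (by positivity)
        exact Finset.single_le_sum (f := fun k => |σ k ((m ^ 2)⁻¹)|)
          (fun k _ => abs_nonneg _) (Finset.mem_univ j)

private lemma divisors_finite {a : 𝓞 F} (ha : a ≠ 0) :
    {I : Ideal (𝓞 F) | I ∣ Ideal.span {a}}.Finite := by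
  classical
  have hne : (Ideal.span {a} : Ideal (𝓞 F)) ≠ 0 := by
    simpa [Ideal.span_singleton_eq_bot] using ha
  haveI := UniqueFactorizationMonoid.fintypeSubtypeDvd (Ideal.span {a} : Ideal (𝓞 F)) hne
  have hfin : Finite {I : Ideal (𝓞 F) // I ∣ Ideal.span {a}} := Finite.of_fintype _
  exact Set.finite_coe_iff.mp hfin

end Aux

/-- The core finiteness assertion of Proposition 4.11 (intersectionD): the set of vectors
`(y, y')` in `m𝒪 × m𝒪` of trace `n` with `σ(y)σ(y') > 0` for all `σ` has finitely many
orbits under the totally positive units acting by `λ·(y, y') = (λy, λ⁻¹y')`. -/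
theorem finitely_many_unit_orbits
    (F : Type*) [Field F] [NumberField F] (N : ℕ)
    (hdeg : Module.finrank ℚ F = N)
    (σ : Fin N → (F →+* ℝ)) (hσ : Function.Bijective σ)
    (m : F) (hm : m ≠ 0) (n : ℚ) (hn : 0 < n)
    (S : Set (F × F))
    (hS : S = {p : F × F | (∃ a : 𝓞 F, p.1 = m * (a : F)) ∧ (∃ a : 𝓞 F, p.2 = m * (a : F)) ∧
      Algebra.trace ℚ F (p.1 * p.2) = n ∧ ∀ j, 0 < σ j p.1 * σ j p.2}) :
    ∃ S₀ : Finset (F × F), ↑S₀ ⊆ S ∧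
      ∀ p ∈ S, ∃ u : (𝓞 F)ˣ, (∀ j, 0 < σ j ((u : 𝓞 F) : F)) ∧
        ∃ q ∈ S₀, p = (((u : 𝓞 F) : F) * q.1, (((u⁻¹ : (𝓞 F)ˣ) : 𝓞 F) : F) * q.2) := by
  classical
  -- the element of 𝓞 F underlying a member of m𝓞
  let aOf : F → 𝓞 F := fun x => if h : ∃ a : 𝓞 F, x = m * (a : F) then h.choose else 0
  have haOf : ∀ x : F, (∃ a : 𝓞 F, x = m * (a : F)) → x = m * (aOf x : F) := by
    intro x h
    simp only [aOf, dif_pos h]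
    exact h.choose_spec
  let aOf2 : F → 𝓞 F := fun z => if h : ∃ a : 𝓞 F, z = m ^ 2 * (a : F) then h.choose else 0
  have haOf2 : ∀ z : F, (∃ a : 𝓞 F, z = m ^ 2 * (a : F)) → z = m ^ 2 * (aOf2 z : F) := by
    intro z h
    simp only [aOf2, dif_pos h]
    exact h.choose_spec
  -- the invariant map
  let inv : F × F → F × Ideal (𝓞 F) × (Fin N → Bool) :=
    fun p => (p.1 * p.2, Ideal.span {aOf p.1}, fun j => decide (0 < σ j p.1))
  -- set of possible products
  set Z : Set F := {z : F | (∃ a : 𝓞 F, z = m ^ 2 * (a : F)) ∧ Algebra.trace ℚ F z = n ∧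
      ∀ j, 0 < σ j z} with hZdef
  have hZfin : Z.Finite := zset_finite hdeg hσ hm hn
  -- basic membership facts
  have hmemZ : ∀ p ∈ S, p.1 * p.2 ∈ Z := by
    intro p hp
    rw [hS] at hp
    obtain ⟨⟨a₁, h1⟩, ⟨a₂, h2⟩, htr, hpos⟩ := hp
    refine ⟨⟨a₁ * a₂, ?_⟩, htr, fun j => ?_⟩
    · rw [h1, h2]; push_cast; ring
    · rw [map_mul]; exact hpos j
  have hZnz : ∀ z ∈ Z, aOf2 z ≠ 0 := by
    rintro z ⟨hz1, htr, hpos⟩ h0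
    have hz := haOf2 z hz1
    rw [h0] at hz
    simp only [map_zero, mul_zero] at hz
    rw [hz] at htr
    simp only [map_zero] at htr
    exact absurd htr.symm (ne_of_gt (by exact_mod_cast hn))
  -- set of possible ideals
  set D : Set (Ideal (𝓞 F)) := ⋃ z ∈ Z, {I : Ideal (𝓞 F) | I ∣ Ideal.span {aOf2 z}} with hDdef
  have hDfin : D.Finite := Set.Finite.biUnion hZfin (fun z hz => divisors_finite (hZnz z hz))
  -- the image of the invariant map is finite
  have himg : (inv '' S).Finite := by
    apply Set.Finite.subset (hZfin.prod (hDfin.prod (Set.finite_univ (α := Fin N → Bool))))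
    rintro t ⟨p, hp, rfl⟩
    refine ⟨hmemZ p hp, ?_, trivial⟩
    -- span {aOf p.1} divides span {aOf2 (p.1*p.2)}
    have hpz := hmemZ p hp
    rw [hS] at hp
    obtain ⟨⟨a₁, h1⟩, ⟨a₂, h2⟩, htr, hpos⟩ := hp
    have e1 : p.1 = m * (aOf p.1 : F) := haOf p.1 ⟨a₁, h1⟩
    have e2 : p.2 = m * (aOf p.2 : F) := haOf p.2 ⟨a₂, h2⟩
    have e3 : p.1 * p.2 = m ^ 2 * (aOf2 (p.1 * p.2) : F) := haOf2 _ hpz.1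
    have key : p.1 * p.2 = m ^ 2 * ((aOf p.1 : F) * (aOf p.2 : F)) := by
      conv_lhs => rw [e1, e2]
      ring
    have hprod : aOf2 (p.1 * p.2) = aOf p.1 * aOf p.2 := by
      apply NumberField.RingOfIntegers.coe_injective
      apply mul_left_cancel₀ (pow_ne_zero 2 hm)
      rw [← e3, key, map_mul]
    refine Set.mem_biUnion hpz ?_
    show Ideal.span {aOf p.1} ∣ Ideal.span {aOf2 (p.1 * p.2)}
    rw [Ideal.dvd_iff_le]
    exact Ideal.span_singleton_le_span_singleton.mpr ⟨aOf p.2, hprod⟩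
  -- core: equal invariants means same orbit
  have hN : 0 < N := by
    rw [← hdeg]; exact Module.finrank_pos
  have hcore : ∀ p ∈ S, ∀ q ∈ S, inv p = inv q →
      ∃ u : (𝓞 F)ˣ, (∀ j, 0 < σ j ((u : 𝓞 F) : F)) ∧
        p = (((u : 𝓞 F) : F) * q.1, (((u⁻¹ : (𝓞 F)ˣ) : 𝓞 F) : F) * q.2) := by
    intro p hp q hq hinv
    have hz : p.1 * p.2 = q.1 * q.2 := congrArg Prod.fst hinv
    have hspan : Ideal.span {aOf p.1} = Ideal.span {aOf q.1} :=
      congrArg (fun t => t.2.1) hinv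
    have hsgn : ∀ j, (0 < σ j p.1 ↔ 0 < σ j q.1) := by
      intro j
      have := congrFun (congrArg (fun t => t.2.2) hinv) j
      simpa [inv, decide_eq_decide] using this
    rw [hS] at hp hq
    obtain ⟨⟨a₁, h1⟩, ⟨a₂, h2⟩, htrp, hposp⟩ := hp
    obtain ⟨⟨b₁, k1⟩, ⟨b₂, k2⟩, htrq, hposq⟩ := hq
    have j0 : Fin N := ⟨0, hN⟩
    have hp1 : p.1 ≠ 0 := by
      intro h
      have := hposp j0
      rw [h, map_zero, zero_mul] at this
      exact lt_irrefl 0 this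
    have hq1 : q.1 ≠ 0 := by
      intro h
      have := hposq j0
      rw [h, map_zero, zero_mul] at this
      exact lt_irrefl 0 this
    -- get a unit
    obtain ⟨u, hu⟩ := Ideal.span_singleton_eq_span_singleton.mp hspan
    -- aOf p.1 * u = aOf q.1, so p.1 = (u⁻¹ : F) * q.1
    have e1 : p.1 = m * (aOf p.1 : F) := haOf p.1 ⟨a₁, h1⟩
    have e2 : q.1 = m * (aOf q.1 : F) := haOf q.1 ⟨b₁, k1⟩
    have hw : aOf q.1 * ((u⁻¹ : (𝓞 F)ˣ) : 𝓞 F) = aOf p.1 := by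
      rw [← hu, Units.mul_inv_cancel_right]
    have hwF : ((aOf q.1 : F)) * ((((u⁻¹ : (𝓞 F)ˣ) : 𝓞 F)) : F) = ((aOf p.1 : F)) := by
      have h := congrArg (algebraMap (𝓞 F) F) hw
      rw [map_mul] at h
      exact h
    have hpq1 : p.1 = (((u⁻¹ : (𝓞 F)ˣ) : 𝓞 F) : F) * q.1 := by
      rw [e1, e2, ← hwF]
      ring
    have hco : ((((u⁻¹ : (𝓞 F)ˣ) : 𝓞 F)) : F) * (((u : 𝓞 F)) : F) = 1 := by
      have h1 : ((u⁻¹ : (𝓞 F)ˣ) : 𝓞 F) * ((u : 𝓞 F)) = 1 := by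
        rw [← Units.val_mul]
        simp
      calc ((((u⁻¹ : (𝓞 F)ˣ) : 𝓞 F)) : F) * (((u : 𝓞 F)) : F)
          = algebraMap (𝓞 F) F (((u⁻¹ : (𝓞 F)ˣ) : 𝓞 F) * ((u : 𝓞 F))) := (map_mul _ _ _).symm
      _ = 1 := by rw [h1, map_one]
    have hwne : ((((u⁻¹ : (𝓞 F)ˣ) : 𝓞 F)) : F) ≠ 0 := by
      intro h
      rw [h, zero_mul] at hco
      exact zero_ne_one hco
    have hp2 : p.2 = ((u : 𝓞 F) : F) * q.2 := by
      have h5 : ((((u⁻¹ : (𝓞 F)ˣ) : 𝓞 F)) : F) * q.1 * p.2 = q.1 * q.2 := by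
        rw [← hpq1]; exact hz
      apply mul_left_cancel₀ (mul_ne_zero hwne hq1)
      calc ((((u⁻¹ : (𝓞 F)ˣ) : 𝓞 F)) : F) * q.1 * p.2 = q.1 * q.2 := h5
      _ = (((((u⁻¹ : (𝓞 F)ˣ) : 𝓞 F)) : F) * (((u : 𝓞 F)) : F)) * (q.1 * q.2) := by
          rw [hco, one_mul]
      _ = ((((u⁻¹ : (𝓞 F)ˣ) : 𝓞 F)) : F) * q.1 * (((u : 𝓞 F) : F) * q.2) := by ring
    refine ⟨u⁻¹, ?_, ?_⟩
    · -- positivity of u⁻¹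
      intro j
      have hqj : σ j q.1 ≠ 0 := fun h => hq1 ((σ j).injective (by rw [h, map_zero]))
      have hpj : σ j p.1 ≠ 0 := fun h => hp1 ((σ j).injective (by rw [h, map_zero]))
      have happ : σ j p.1 = σ j ((((u⁻¹ : (𝓞 F)ˣ) : 𝓞 F)) : F) * σ j q.1 := by
        rw [hpq1, map_mul]
      have hkey : 0 < σ j p.1 * σ j q.1 := by
        rcases hqj.lt_or_gt with hneg | hpos
        · have hnq : ¬ (0 < σ j q.1) := not_lt.mpr hneg.le
          have hnp : ¬ (0 < σ j p.1) := fun hh => hnq ((hsgn j).1 hh)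
          exact mul_pos_of_neg_of_neg (lt_of_le_of_ne (not_lt.mp hnp) hpj) hneg
        · exact mul_pos ((hsgn j).2 hpos) hpos
      have hkey2 : 0 < σ j ((((u⁻¹ : (𝓞 F)ˣ) : 𝓞 F)) : F) * (σ j q.1 * σ j q.1) := by
        rw [happ, mul_assoc] at hkey
        exact hkey
      have hqq : 0 < σ j q.1 * σ j q.1 := mul_self_pos.mpr hqj
      nlinarith [hkey2, hqq]
    · rw [inv_inv]
      exact Prod.ext_iff.mpr ⟨hpq1, hp2⟩
  -- choose representatives
  let g : F × Ideal (𝓞 F) × (Fin N → Bool) → F × F :=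
    fun t => if h : t ∈ inv '' S then h.choose else (0, 0)
  have hg : ∀ t ∈ inv '' S, g t ∈ S ∧ inv (g t) = t := by
    intro t ht
    simp only [g, dif_pos ht]
    exact ⟨ht.choose_spec.1, ht.choose_spec.2⟩
  refine ⟨himg.toFinset.image g, ?_, ?_⟩
  · intro x hx
    simp only [Finset.coe_image, Set.mem_image, Finset.mem_coe,
      Set.Finite.mem_toFinset] at hx
    obtain ⟨t, ht, rfl⟩ := hx
    exact (hg t ht).1
  · intro p hp
    have ht : inv p ∈ inv '' S := ⟨p, hp, rfl⟩
    obtain ⟨hgS, hginv⟩ := hg _ ht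
    obtain ⟨u, hupos, hueq⟩ := hcore p hp (g (inv p)) hgS hginv.symm
    refine ⟨u, hupos, g (inv p), ?_, hueq⟩
    exact Finset.mem_image_of_mem g (himg.mem_toFinset.mpr ht)
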